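/- Let k ≥ 3 and m ≥ 2k be integers. Then the digraph G⃗_{2m,2k} does not contain any digraph in 𝒞_k ∪ 𝒞′_k as a subdigraph. -/

import Mathlib

/-- A digraph `D` (given by its arc relation `E`) contains the digraph given by the
arc relation `F` as a subdigraph: there is an injective map of the vertices preserving arcs. -/
def ContainsDigraph {V W : Type*} (E : V → V → Prop) (F : W → W → Prop) : Prop :=
  ∃ f : W → V, Function.Injective f ∧ ∀ u v : W, F u v → E (f u) (f v)

/-- The orientation of the `k`-cycle determined by `o : ZMod k → Bool`:
the edge `i` of the cycle joins `i` and `i + 1`, and is oriented `i → i + 1`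
when `o i = true`, and `i + 1 → i` when `o i = false`. -/
def cycleOrient {k : ℕ} (o : ZMod k → Bool) : ZMod k → ZMod k → Prop :=
  fun u v => (o u = true ∧ v = u + 1) ∨ (o v = false ∧ u = v + 1)

/-- The arc obtained by orienting the edge `i` of the `k`-cycle according to `o`.
Injectivity of `cycleArc o` says that distinct edges yield distinct arcs, i.e. the
orientation is a genuine digraph without parallel arcs (this is automatic for `k ≥ 3`). -/
def cycleArc {k : ℕ} (o : ZMod k → Bool) (i : ZMod k) : ZMod k × ZMod k :=
  if o i then (i, i + 1) else (i + 1, i)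

open Classical in
/-- The number of blocks of the orientation of the `k`-cycle given by `o`:
a directed cycle has a single block, and otherwise the blocks (maximal directed
subpaths) correspond bijectively to the indices `i` at which the orientation
changes between the consecutive edges `i` and `i + 1`. -/
noncomputable def blockCount {k : ℕ} (o : ZMod k → Bool) : ℕ :=
  if ∀ i, o i = o 0 then 1 else {i : ZMod k | o i ≠ o (i + 1)}.ncard

/-- The orientation of the `k`-cycle given by `o` has a block of length one, i.e.
some edge `i + 1` is a maximal directed subpath on its own. -/
def hasShortBlock {k : ℕ} (o : ZMod k → Bool) : Prop :=
  ∃ i : ZMod k, o i ≠ o (i + 1) ∧ o (i + 1) ≠ o (i + 2)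

/-- The digraph given by the arc relation `E` contains, as a subdigraph, a member of
`𝒞_k ∪ 𝒞'_k`: i.e. an orientation of a cycle of length `ℓ` with `2 ≤ ℓ ≤ k` (a genuine
digraph, whence the injectivity of `cycleArc o`) which either is a directed cycle
(a single block) or consists of exactly two blocks, one of which has length one. -/
def ContainsFamilyCk (k : ℕ) {V : Type*} (E : V → V → Prop) : Prop :=
  ∃ (ℓ : ℕ) (o : ZMod ℓ → Bool), 2 ≤ ℓ ∧ ℓ ≤ k ∧
    Function.Injective (cycleArc o) ∧
    (blockCount o = 1 ∨ (blockCount o = 2 ∧ hasShortBlock o)) ∧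
    ContainsDigraph E (cycleOrient o)

/-- The vertices of the digraph `G⃗_{2m,2k}`: `2k`-tuples of pairwise distinct elements
of a `2m`-element set. -/
def ShiftVert (m k : ℕ) : Type := {a : Fin (2 * k) → Fin (2 * m) // Function.Injective a}

/-- The arc relation of `G⃗_{2m,2k}`: there is an arc from `a` to `b` iff
`a (i + 1) = b i` for all `0 ≤ i < 2k - 1`. -/
def ShiftRel (m k : ℕ) : ShiftVert m k → ShiftVert m k → Prop :=
  fun a b => ∀ i j : Fin (2 * k), (j : ℕ) = (i : ℕ) + 1 → a.1 j = b.1 i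

lemma chain_const {ℓ : ℕ} (o : ZMod ℓ → Bool) (a : ZMod ℓ) :
    ∀ t : ℕ, (∀ s : ℕ, s < t → o (a + s) = o (a + s + 1)) → o (a + t) = o a := by
  intro t
  induction t with
  | zero => intro _; simp
  | succ n ih =>
    intro h
    have h1 : o (a + n) = o a := ih (fun s hs => h s (by omega))
    have h2 : o (a + n) = o (a + n + 1) := h n (by omega)
    have h3 : ((n + 1 : ℕ) : ZMod ℓ) = (n : ZMod ℓ) + 1 := by push_cast; ring
    rw [h3, ← add_assoc, ← h2, h1]

lemma path_shift {m k : ℕ} (g : ℕ → ShiftVert m k) :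
    ∀ (d : ℕ), (∀ s, s < d → ShiftRel m k (g s) (g (s+1))) →
    ∀ t (h : t + d < 2 * k), (g d).1 ⟨t, by omega⟩ = (g 0).1 ⟨t + d, h⟩ := by
  intro d
  induction d with
  | zero => intro _ t h; rfl
  | succ d ih =>
    intro hg t h
    have h1 : (g (d+1)).1 ⟨t, by omega⟩ = (g d).1 ⟨t+1, by omega⟩ :=
      ((hg d (by omega)) ⟨t, by omega⟩ ⟨t+1, by omega⟩ rfl).symm
    rw [h1, ih (fun s hs => hg s (by omega)) (t+1) (by omega)]
    exact congrArg _ (Fin.ext (show t+1+d = t+(d+1) by omega))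

lemma cycle_helper {m k : ℕ} (hk : 3 ≤ k) (ℓ : ℕ) (hℓ2 : 2 ≤ ℓ) (hℓk : ℓ ≤ k)
    (g : ℕ → ShiftVert m k)
    (harc : ∀ s, s < ℓ → ShiftRel m k (g s) (g (s+1)))
    (hcyc : g ℓ = g 0) : False := by
  have hp := path_shift g ℓ harc 0 (by omega)
  rw [hcyc] at hp
  have h2 : (0:ℕ) = 0 + ℓ := congrArg Fin.val ((g 0).2 hp)
  omega

lemma twoblock_helper {m k : ℕ} (hk : 3 ≤ k) (ℓ : ℕ) (hℓ2 : 2 ≤ ℓ) (hℓk : ℓ ≤ k)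
    (g : ℕ → ShiftVert m k)
    (harc : ∀ s, s < ℓ - 1 → ShiftRel m k (g s) (g (s+1)))
    (hshort : ShiftRel m k (g 0) (g (ℓ-1))) : ℓ = 2 := by
  have hp := path_shift g (ℓ-1) harc 0 (by omega)
  have hs := hshort ⟨0, by omega⟩ ⟨1, by omega⟩ rfl
  have h2 : (1:ℕ) = 0 + (ℓ-1) := congrArg Fin.val ((g 0).2 (hs.trans hp))
  omega

/-- Claim 3.4. For `k ≥ 3` and `m ≥ 2k`, the digraph `G⃗_{2m,2k}` contains no digraph in
`𝒞_k ∪ 𝒞'_k` as a subdigraph. -/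
theorem shift_digraph_family_free (k m : ℕ) (hk : 3 ≤ k) (hm : 2 * k ≤ m) :
    ¬ ContainsFamilyCk k (ShiftRel m k) := by
  rintro ⟨ℓ, o, hℓ2, hℓk, hinj, hblock, f, -, hf⟩
  haveI : NeZero ℓ := ⟨by omega⟩
  have hz : ∀ s : ℕ, 0 < s → s < ℓ → ((s : ZMod ℓ) ≠ 0) := by
    intro s h1 h2 h
    have := (ZMod.natCast_eq_zero_iff s ℓ).mp h
    exact absurd (Nat.le_of_dvd h1 this) (by omega)
  have hone : (1 : ZMod ℓ) ≠ 0 := by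
    have := hz 1 one_pos (by omega); simpa using this
  obtain hb | ⟨hb2, i, hi1, hi2⟩ := hblock
  · -- blockCount = 1
    by_cases hall : ∀ j, o j = o 0
    · -- genuine directed cycle
      cases h0 : o 0 with
      | true =>
        refine cycle_helper hk ℓ hℓ2 hℓk (fun s => f ((s : ℕ) : ZMod ℓ)) ?_ ?_
        · intro s _
          exact hf _ _ (Or.inl ⟨(hall _).trans h0, by push_cast; ring⟩)
        · exact congrArg f (by simp)
      | false =>
        refine cycle_helper hk ℓ hℓ2 hℓk (fun s => f (-((s : ℕ) : ZMod ℓ))) ?_ ?_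
        · intro s _
          exact hf _ _ (Or.inr ⟨(hall _).trans h0, by push_cast; ring⟩)
        · exact congrArg f (by simp)
    · -- one sign change: impossible
      unfold blockCount at hb
      rw [if_neg hall] at hb
      obtain ⟨i, hSi⟩ := Set.ncard_eq_one.mp hb
      have hii : o i ≠ o (i+1) := by
        have : i ∈ ({i} : Set (ZMod ℓ)) := rfl
        rw [← hSi] at this; exact this
      have hmem : ∀ j : ZMod ℓ, j ≠ i → o j = o (j+1) := by
        intro j hj
        by_contra h
        have hjs : j ∈ {j : ZMod ℓ | o j ≠ o (j+1)} := h
        rw [hSi] at hjs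
        exact hj hjs
      have hch := chain_const o (i+1) (ℓ-1) (by
        intro s hs
        apply hmem
        intro hcon
        exact hz (1+s) (by omega) (by omega) (by push_cast; linear_combination hcon))
      have he : (i+1) + ((ℓ-1 : ℕ) : ZMod ℓ) = i := by
        have h1 : ((1 + (ℓ-1) : ℕ) : ZMod ℓ) = 0 := by
          rw [show 1 + (ℓ-1) = ℓ by omega, ZMod.natCast_self]
        push_cast at h1
        linear_combination h1
      rw [he] at hch
      exact hii hch
  · -- blockCount = 2 with a short block
    have hne1 : (i : ZMod ℓ) ≠ i + 1 := fun h => hone (left_eq_add.mp h)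
    have hi2' : o (i+1) ≠ o (i+1+1) := by
      rwa [show i+2 = i+1+1 by ring] at hi2
    have hall' : ¬ ∀ j, o j = o 0 := fun h => hi1 ((h i).trans (h (i+1)).symm)
    unfold blockCount at hb2
    rw [if_neg hall'] at hb2
    have hsub : ({i, i+1} : Set (ZMod ℓ)) ⊆ {j : ZMod ℓ | o j ≠ o (j+1)} := by
      intro x hx
      rcases hx with rfl | hx
      · exact hi1
      · rw [Set.mem_singleton_iff] at hx
        subst hx
        exact hi2'
    have hSeq : ({i, i+1} : Set (ZMod ℓ)) = {j : ZMod ℓ | o j ≠ o (j+1)} :=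
      Set.eq_of_subset_of_ncard_le hsub (by rw [hb2, Set.ncard_pair hne1]) (Set.toFinite _)
    have hout : ∀ j : ZMod ℓ, j ≠ i → j ≠ i+1 → o j = o (j+1) := by
      intro j h1 h2
      by_contra h
      have hjs : j ∈ {j : ZMod ℓ | o j ≠ o (j+1)} := h
      rw [← hSeq] at hjs
      rcases hjs with rfl | hjs
      · exact h1 rfl
      · rw [Set.mem_singleton_iff] at hjs; exact h2 hjs
    have hc2 : o (i+1+1) = o i := by
      revert hi1 hi2'; cases o i <;> cases o (i+1) <;> cases o (i+1+1) <;> simp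
    have claim : ∀ t : ℕ, t + 1 < ℓ → o (i + 1 + 1 + (t : ZMod ℓ)) = o i := by
      intro t ht
      rcases Nat.lt_or_ge (t+2) ℓ with h | h
      · have hch := chain_const o (i+1+1) t (by
          intro s hs
          apply hout
          · intro hcon
            exact hz (2+s) (by omega) (by omega) (by push_cast; linear_combination hcon)
          · intro hcon
            exact hz (1+s) (by omega) (by omega) (by push_cast; linear_combination hcon))
        rw [hch, hc2]
      · have ht2 : t = ℓ - 2 := by omega
        subst ht2
        have h1 : ((2 + (ℓ-2) : ℕ) : ZMod ℓ) = 0 := by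
          rw [show 2 + (ℓ-2) = ℓ by omega, ZMod.natCast_self]
        push_cast at h1
        have he : i + 1 + 1 + ((ℓ-2 : ℕ) : ZMod ℓ) = i := by linear_combination h1
        rw [he]
    -- the endgame when ℓ = 2
    have hL2 : ℓ = 2 → False := by
      intro h2
      have hz2 : ((2:ℕ) : ZMod ℓ) = 0 := by rw [h2]; exact ZMod.natCast_self 2
      push_cast at hz2
      have e : i + 1 + 1 = i := by linear_combination hz2
      have hval : o (i+1) = !(o i) := by
        revert hi1; cases o i <;> cases o (i+1) <;> simp
      have harceq : cycleArc o i = cycleArc o (i+1) := by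
        cases hoi : o i <;> simp [cycleArc, hval, hoi, e]
      exact hne1 (hinj harceq)
    apply hL2
    cases hc : o i with
    | true =>
      have hfalse : o (i+1) = false := by
        revert hi1; cases o (i+1) <;> simp [hc]
      refine twoblock_helper hk ℓ hℓ2 hℓk (fun s => f (i + 1 + 1 + ((s:ℕ) : ZMod ℓ))) ?_ ?_
      · intro s hs
        refine hf _ _ (Or.inl ⟨?_, by push_cast; ring⟩)
        rw [claim s (by omega), hc]
      · have e0 : (fun s => f (i + 1 + 1 + ((s:ℕ) : ZMod ℓ))) 0 = f (i+1+1) := by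
          simp
        have e1 : (fun s => f (i + 1 + 1 + ((s:ℕ) : ZMod ℓ))) (ℓ-1) = f (i+1) := by
          show f _ = _
          congr 1
          have h1 : ((2 + (ℓ-1) : ℕ) : ZMod ℓ) = ((1:ℕ) : ZMod ℓ) := by
            rw [show 2 + (ℓ-1) = ℓ + 1 by omega]
            push_cast [ZMod.natCast_self]
            ring
          push_cast at h1
          linear_combination h1
        beta_reduce at e0 e1
        rw [e0, e1]
        exact hf _ _ (Or.inr ⟨hfalse, by ring⟩)
    | false =>
      have htrue : o (i+1) = true := by
        revert hi1; cases o (i+1) <;> simp [hc]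
      refine twoblock_helper hk ℓ hℓ2 hℓk (fun s => f (i + 1 - ((s:ℕ) : ZMod ℓ))) ?_ ?_
      · intro s hs
        refine hf _ _ (Or.inr ⟨?_, by push_cast; ring⟩)
        have hcast : ((ℓ-s-2 : ℕ) : ZMod ℓ) = -((s:ℕ) : ZMod ℓ) - 2 := by
          rw [show ℓ-s-2 = ℓ-(s+2) by omega, Nat.cast_sub (by omega), ZMod.natCast_self]
          push_cast; ring
        have he : i + 1 - (((s+1:ℕ)) : ZMod ℓ) = i + 1 + 1 + ((ℓ-s-2 : ℕ) : ZMod ℓ) := by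
          rw [hcast]; push_cast; ring
        rw [he, claim (ℓ-s-2) (by omega), hc]
      · have e0 : (fun s => f (i + 1 - ((s:ℕ) : ZMod ℓ))) 0 = f (i+1) := by simp
        have e1 : (fun s => f (i + 1 - ((s:ℕ) : ZMod ℓ))) (ℓ-1) = f (i+1+1) := by
          show f _ = _
          congr 1
          have hcast : ((ℓ-1 : ℕ) : ZMod ℓ) = -1 := by
            rw [show ℓ-1 = ℓ-1 by rfl, Nat.cast_sub (by omega), ZMod.natCast_self]
            push_cast; ring
          rw [hcast]; ring
        beta_reduce at e0 e1
        rw [e0, e1]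
        exact hf _ _ (Or.inl ⟨htrue, by ring⟩)
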